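/- Let n, k, t be positive integers with k ≥ t + 3 and n ≥ 2k + 1 + δ, where δ = 1 if q = 2 and δ = 0 otherwise. Define g(n,k,t,x) = [x-t choose 1]_q [n-t-1 choose k-t-1]_q + q^(x-t) [k-x+1 choose 1]_q [k-t+1 choose 1]_q [n-t-2 choose k-t-2]_q + q^(x-t) [k-x+1 choose 1]_q + q^(x-t+1) [t choose 1]_q [k-t choose 1]_q [n-x choose k-x]_q + 2. Then g(n,k,t,x) < g(n,k,t,x+1) for all x with t+2 ≤ x ≤ k-1. -/

import Mathlib

/-- The Gaussian binomial coefficient `[n choose k]_q`, via the product formula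
`∏ i < k, (q^(n-i) - 1)/(q^(k-i) - 1)` (the division is exact for `q ≥ 2`, `k ≤ n`). -/
def gaussBinom (q n k : ℕ) : ℕ :=
  (∏ i ∈ Finset.range k, (q ^ (n - i) - 1)) / (∏ i ∈ Finset.range k, (q ^ (k - i) - 1))

/-- The quantity `g(n,k,t,x)` from the paper. -/
def gAux (q n k t x : ℕ) : ℕ :=
  gaussBinom q (x - t) 1 * gaussBinom q (n - t - 1) (k - t - 1) +
    q ^ (x - t) * gaussBinom q (k - x + 1) 1 * gaussBinom q (k - t + 1) 1 *
      gaussBinom q (n - t - 2) (k - t - 2) +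
    q ^ (x - t) * gaussBinom q (k - x + 1) 1 +
    q ^ (x - t + 1) * gaussBinom q t 1 * gaussBinom q (k - t) 1 *
      gaussBinom q (n - x) (k - x) + 2

namespace Stmt11

def G (q : ℕ) : ℕ → ℕ → ℕ
  | _, 0 => 1
  | 0, _+1 => 0
  | n+1, k+1 => q^(k+1) * G q n (k+1) + G q n k

def fac (q m : ℕ) : ℕ := ∏ j ∈ Finset.range m, (q^(j+1) - 1)

lemma fac_zero (q : ℕ) : fac q 0 = 1 := rfl

lemma fac_succ (q m : ℕ) : fac q (m+1) = fac q m * (q^(m+1) - 1) :=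
  Finset.prod_range_succ _ _

lemma fac_pos {q : ℕ} (hq : 2 ≤ q) (m : ℕ) : 0 < fac q m := by
  apply Finset.prod_pos
  intro i _
  have : q ≤ q^(i+1) := Nat.le_self_pow (by omega) q
  omega

lemma G_zero_right (q n : ℕ) : G q n 0 = 1 := by cases n <;> rfl

lemma G_eq_zero (q : ℕ) : ∀ n k, n < k → G q n k = 0
  | 0, _+1, _ => rfl
  | n+1, k+1, h => by
      have h1 := G_eq_zero q n (k+1) (by omega)
      have h2 := G_eq_zero q n k (by omega)
      show q^(k+1) * G q n (k+1) + G q n k = 0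
      rw [h1, h2]; ring

lemma key {q : ℕ} (hq : 2 ≤ q) : ∀ n k, k ≤ n → fac q n = G q n k * fac q k * fac q (n - k) := by
  intro n
  induction n with
  | zero =>
    intro k hk
    have : k = 0 := by omega
    subst this
    simp [G_zero_right, fac_zero]
  | succ n ih =>
    intro k hk
    match k with
    | 0 => simp [G_zero_right, fac_zero]
    | k+1 =>
      show fac q (n+1) = (q^(k+1) * G q n (k+1) + G q n k) * fac q (k+1) * fac q (n+1-(k+1))
      rcases Nat.lt_or_ge k n with h | h
      · have ih1 : G q n (k+1) * fac q (k+1) * fac q (n - k - 1) = fac q n := by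
          rw [ih (k+1) (by omega), show n - (k+1) = n - k - 1 from by omega]
        have ih2 : G q n k * fac q k * fac q (n - k) = fac q n := (ih k (by omega)).symm
        have hpow : q^(k+1) * (q^(n-k) - 1) + (q^(k+1) - 1) = q^(n+1) - 1 := by
          have h1 : q^(k+1) * q^(n-k) = q^(n+1) := by rw [← pow_add]; congr 1; omega
          have h2 : 1 ≤ q^(k+1) := Nat.one_le_pow _ _ (by omega)
          have h3 : 1 ≤ q^(n-k) := Nat.one_le_pow _ _ (by omega)
          have h4 : q^(k+1) ≤ q^(n+1) := Nat.pow_le_pow_right (by omega) (by omega)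
          rw [Nat.mul_sub, mul_one, h1]
          omega
        have hfnk : fac q (n - k) = fac q (n-k-1) * (q^(n-k) - 1) := by
          rw [show n - k = (n-k-1)+1 from by omega, fac_succ, show n-k-1+1 = n-k from by omega]
        calc fac q (n+1) = fac q n * (q^(k+1) * (q^(n-k) - 1)) + fac q n * (q^(k+1) - 1) := by
              rw [fac_succ, ← hpow]; ring
          _ = (G q n (k+1) * fac q (k+1) * fac q (n - k - 1)) * (q^(k+1) * (q^(n-k) - 1)) +
              (G q n k * fac q k * fac q (n - k)) * (q^(k+1) - 1) := by rw [ih1, ih2]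
          _ = (q^(k+1) * G q n (k+1) + G q n k) * fac q (k+1) * fac q (n+1-(k+1)) := by
              rw [show n+1-(k+1) = n - k from by omega, hfnk, fac_succ]; ring
      · have hkn : k = n := by omega
        subst hkn
        have h1 : G q k k = 1 := by
          have hkey := ih k le_rfl
          rw [Nat.sub_self, fac_zero, mul_one] at hkey
          have hp := fac_pos hq k
          by_contra hne
          rcases Nat.lt_or_ge (G q k k) 1 with h0 | h0
          · have hz : G q k k = 0 := by omega
            rw [hz, zero_mul] at hkey; omega
          · have h2 : 2 ≤ G q k k := by omega
            have h3 : 2 * fac q k ≤ G q k k * fac q k := Nat.mul_le_mul_right _ h2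
            omega
        have h2 : G q k (k+1) = 0 := G_eq_zero q k (k+1) (by omega)
        rw [h1, h2]
        simp [fac]

lemma G_self {q : ℕ} (hq : 2 ≤ q) (n : ℕ) : G q n n = 1 := by
  have hkey := key hq n n le_rfl
  rw [Nat.sub_self, fac_zero, mul_one] at hkey
  have hp := fac_pos hq n
  by_contra hne
  rcases Nat.lt_or_ge (G q n n) 1 with h0 | h0
  · have hz : G q n n = 0 := by omega
    rw [hz, zero_mul] at hkey; omega
  · have h2 : 2 ≤ G q n n := by omega
    have h3 : 2 * fac q n ≤ G q n n * fac q n := Nat.mul_le_mul_right _ h2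
    omega

lemma G_pos {q : ℕ} (hq : 2 ≤ q) {n k : ℕ} (h : k ≤ n) : 0 < G q n k := by
  have hk := key hq n k h
  rcases Nat.eq_zero_or_pos (G q n k) with h0 | h0
  · rw [h0] at hk; simp at hk; have := fac_pos hq n; omega
  · exact h0

lemma ratio {q : ℕ} (hq : 2 ≤ q) {n k : ℕ} (h : k ≤ n) :
    G q (n+1) (k+1) * (q^(k+1) - 1) = (q^(n+1) - 1) * G q n k := by
  have k1 := key hq (n+1) (k+1) (by omega)
  have k2 := key hq n k h
  apply Nat.eq_of_mul_eq_mul_right (show 0 < fac q k * fac q (n-k) from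
    Nat.mul_pos (fac_pos hq k) (fac_pos hq (n-k)))
  calc G q (n+1) (k+1) * (q^(k+1)-1) * (fac q k * fac q (n-k))
      = G q (n+1) (k+1) * fac q (k+1) * fac q (n+1-(k+1)) := by
        rw [fac_succ, show n+1-(k+1) = n-k from by omega]; ring
    _ = fac q (n+1) := k1.symm
    _ = fac q n * (q^(n+1)-1) := fac_succ _ _
    _ = (G q n k * fac q k * fac q (n-k)) * (q^(n+1)-1) := by rw [← k2]
    _ = (q^(n+1)-1) * G q n k * (fac q k * fac q (n-k)) := by ring

lemma G_le_diag (q n k : ℕ) : ∀ j, G q n k ≤ G q (n+j) (k+j) := by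
  intro j
  induction j with
  | zero => exact le_rfl
  | succ j ih =>
    have : G q (n+(j+1)) (k+(j+1)) = q^(k+j+1) * G q (n+j) (k+j+1) + G q (n+j) (k+j) := rfl
    rw [this]
    exact le_trans ih (Nat.le_add_left _ _)

lemma G_one_succ (q m : ℕ) : G q (m+1) 1 = q * G q m 1 + 1 := by
  show q^(0+1) * G q m (0+1) + G q m 0 = q * G q m 1 + 1
  rw [G_zero_right, pow_one]

lemma G_one_succ' (q m : ℕ) : G q (m+1) 1 = G q m 1 + q^m := by
  induction m with
  | zero => simp [G_one_succ, show G q 0 1 = 0 from rfl]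
  | succ m ih =>
    have e1 : G q (m+1+1) 1 = q * G q (m+1) 1 + 1 := G_one_succ q (m+1)
    have e2 := G_one_succ q m
    rw [ih, Nat.mul_add] at e1
    have e4 : q * q^m = q^(m+1) := (pow_succ' q m).symm
    rw [e4] at e1
    omega

lemma G_one_mul {q : ℕ} (hq : 2 ≤ q) (m : ℕ) : G q m 1 * (q - 1) = q^m - 1 := by
  cases m with
  | zero => simp [G_eq_zero q 0 1 (by omega)]
  | succ m =>
    have := ratio hq (Nat.zero_le m)
    simpa [G_zero_right] using this


lemma num_eq {q : ℕ} (hq : 2 ≤ q) {n : ℕ} :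
    ∀ k, k ≤ n → (∏ i ∈ Finset.range k, (q^(n-i) - 1)) * fac q (n - k) = fac q n := by
  intro k
  induction k with
  | zero => simp [fac]
  | succ k ih =>
    intro hk
    rw [Finset.prod_range_succ]
    have h1 : fac q (n - k) = fac q (n - (k+1)) * (q^(n-k) - 1) := by
      rw [show n - k = (n-(k+1))+1 from by omega, fac_succ, show n-(k+1)+1 = n-k from by omega]
    calc (∏ i ∈ Finset.range k, (q^(n-i)-1)) * (q^(n-k)-1) * fac q (n-(k+1))
        = (∏ i ∈ Finset.range k, (q^(n-i)-1)) * fac q (n-k) := by rw [h1]; ring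
      _ = fac q n := ih (by omega)

lemma den_eq (q k : ℕ) : (∏ i ∈ Finset.range k, (q^(k-i) - 1)) = fac q k := by
  rw [fac, ← Finset.prod_range_reflect]
  apply Finset.prod_congr rfl
  intro i hi
  simp only [Finset.mem_range] at hi
  congr 2
  omega

lemma gauss_eq {q : ℕ} (hq : 2 ≤ q) (n k : ℕ) : gaussBinom q n k = G q n k := by
  rcases le_or_gt k n with h | h
  · have hnum : (∏ i ∈ Finset.range k, (q^(n-i) - 1)) = G q n k * fac q k := by
      apply Nat.eq_of_mul_eq_mul_right (fac_pos hq (n-k))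
      rw [num_eq hq k h, key hq n k h]
    rw [gaussBinom, den_eq, hnum, Nat.mul_div_cancel _ (fac_pos hq k)]
  · have h0 : (∏ i ∈ Finset.range k, (q^(n-i) - 1)) = 0 := by
      apply Finset.prod_eq_zero (Finset.mem_range.mpr h)
      simp [Nat.sub_self]
    rw [gaussBinom, h0, Nat.zero_div, G_eq_zero q n k h]


lemma master (q t b c d : ℕ) (hq : 2 ≤ q) (ht : 1 ≤ t) (hd : q = 2 → 1 ≤ d) :
    G q (b+2) 1 * G q (t+6+2*b+2*c+d) (b+c+2) +
      q^(b+2) * G q (c+2) 1 * G q (b+c+4) 1 * G q (t+5+2*b+2*c+d) (b+c+1) +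
      q^(b+2) * G q (c+2) 1 +
      q^(b+3) * G q t 1 * G q (b+c+3) 1 * G q (t+5+b+2*c+d) (c+1) + 2 <
    G q (b+3) 1 * G q (t+6+2*b+2*c+d) (b+c+2) +
      q^(b+3) * G q (c+1) 1 * G q (b+c+4) 1 * G q (t+5+2*b+2*c+d) (b+c+1) +
      q^(b+3) * G q (c+1) 1 +
      q^(b+4) * G q t 1 * G q (b+c+3) 1 * G q (t+4+b+2*c+d) c + 2 := by
  have hqpow : ∀ m : ℕ, 1 ≤ q^m := fun m => Nat.one_le_pow _ _ (by omega)
  set C1 := G q (t+6+2*b+2*c+d) (b+c+2) with hC1def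
  set C0 := G q (t+5+2*b+2*c+d) (b+c+1) with hC0def
  set S4 := G q (b+c+4) 1 with hS4def
  set S3 := G q (b+c+3) 1 with hS3def
  set T := G q t 1 with hTdef
  set X := G q (t+5+b+2*c+d) (c+1) with hXdef
  set Gn := G q (t+4+b+2*c+d) c with hGndef
  set u := G q (c+1) 1 with hudef
  set A := G q (b+2) 1 with hAdef
  have hC0pos : 0 < C0 := G_pos hq (by omega)
  have h4 : X ≤ C0 := by
    have h := G_le_diag q (t+5+b+2*c+d) (c+1) b
    rw [show t+5+b+2*c+d+b = t+5+2*b+2*c+d from by omega,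
        show c+1+b = b+c+1 from by omega] at h
    exact h
  have hr : C1 * (q^(b+c+2) - 1) = (q^(t+6+2*b+2*c+d) - 1) * C0 := by
    have h := ratio hq (show b+c+1 ≤ t+5+2*b+2*c+d from by omega)
    rw [show t+5+2*b+2*c+d+1 = t+6+2*b+2*c+d from by omega,
        show b+c+1+1 = b+c+2 from by omega] at h
    exact h
  have hp : q^(t+6+2*b+2*c+d) - 1
      = q^(t+4+b+c+d) * (q^(b+c+2) - 1) + (q^(t+4+b+c+d) - 1) := by
    have h1 : q^(t+4+b+c+d) * q^(b+c+2) = q^(t+6+2*b+2*c+d) := by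
      rw [← pow_add]; congr 1; omega
    have h4' : q^(t+4+b+c+d) ≤ q^(t+6+2*b+2*c+d) := Nat.pow_le_pow_right (by omega) (by omega)
    rw [Nat.mul_sub, mul_one, h1]
    have := hqpow (t+4+b+c+d)
    have := hqpow (b+c+2)
    omega
  have hC1 : q^(t+4+b+c+d) * C0 + 1 ≤ C1 := by
    have hK2 : q ≤ q^(b+c+2) := Nat.le_self_pow (by omega) q
    have hKpos : 0 < q^(b+c+2) - 1 := by omega
    apply Nat.le_of_mul_le_mul_right _ hKpos
    rw [hr, hp]
    have hle : q^(b+c+2) - 1 ≤ (q^(t+4+b+c+d) - 1) * C0 := by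
      have e1 : q^(b+c+2) ≤ q^(t+4+b+c+d) := Nat.pow_le_pow_right (by omega) (by omega)
      calc q^(b+c+2) - 1 ≤ q^(t+4+b+c+d) - 1 := by omega
        _ = (q^(t+4+b+c+d) - 1) * 1 := (mul_one _).symm
        _ ≤ (q^(t+4+b+c+d) - 1) * C0 := Nat.mul_le_mul_left _ hC0pos
    rw [add_mul, add_mul, one_mul]
    have comm : q^(t+4+b+c+d) * C0 * (q^(b+c+2)-1)
        = q^(t+4+b+c+d) * (q^(b+c+2)-1) * C0 := by ring
    omega
  have e4 : (q^t-1)*(q^(b+c+3)-1) < q^(t+b+c+3) := by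
    have h02 : 0 < q^(b+c+3) := hqpow _
    have h01 : 0 < q^t := hqpow _
    calc (q^t-1)*(q^(b+c+3)-1) ≤ (q^t-1)*q^(b+c+3) := Nat.mul_le_mul_left _ (by omega)
      _ < q^t*q^(b+c+3) := mul_lt_mul_of_pos_right (by omega) h02
      _ = q^(t+b+c+3) := by rw [← pow_add]; congr 1; omega
  have hexp : S4 + q * (T * S3) < q^(t+4+b+c+d) := by
    have g1 := G_one_mul hq (b+c+4)
    have g2 := G_one_mul hq t
    have g3 := G_one_mul hq (b+c+3)
    rw [← hS4def] at g1
    rw [← hTdef] at g2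
    rw [← hS3def] at g3
    have main : (S4 + q * (T * S3)) * ((q-1)*(q-1)) < q^(t+4+b+c+d) * ((q-1)*(q-1)) := by
      have expand : (S4 + q * (T * S3)) * ((q-1)*(q-1))
          = (S4 * (q-1)) * (q-1) + q * ((T * (q-1)) * (S3 * (q-1))) := by ring
      rw [expand, g1, g2, g3]
      rcases eq_or_ne q 2 with rfl | hq3
      · have hd1 := hd rfl
        have e5 : (2:ℕ)^(b+c+4) = 2 * 2^(b+c+3) := by
          rw [show b+c+4 = b+c+3+1 from by omega, pow_succ']
        have e6 : (2:ℕ)^(b+c+3) ≤ 2^(t+b+c+3) := Nat.pow_le_pow_right (by omega) (by omega)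
        have e7 : (2:ℕ)^(t+b+c+3) * 4 ≤ 2^(t+4+b+c+d) := by
          calc (2:ℕ)^(t+b+c+3)*4 = 2^(t+b+c+3)*2^2 := by norm_num
            _ = 2^(t+b+c+3+2) := (pow_add 2 _ 2).symm
            _ ≤ 2^(t+4+b+c+d) := Nat.pow_le_pow_right (by omega) (by omega)
        omega
      · have hq3' : 3 ≤ q := by omega
        have f1 : (q^(b+c+4)-1)*(q-1) ≤ q^(t+4+b+c+d) := by
          calc (q^(b+c+4)-1)*(q-1) ≤ q^(b+c+4)*(q-1) := Nat.mul_le_mul_right _ (by omega)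
            _ ≤ q^(b+c+4)*q := Nat.mul_le_mul_left _ (by omega)
            _ = q^(b+c+5) := by rw [← pow_succ]
            _ ≤ q^(t+4+b+c+d) := Nat.pow_le_pow_right (by omega) (by omega)
        have f2 : q*((q^t-1)*(q^(b+c+3)-1)) < q^(t+4+b+c+d) := by
          calc q*((q^t-1)*(q^(b+c+3)-1)) < q*q^(t+b+c+3) := mul_lt_mul_of_pos_left e4 (by omega)
            _ = q^(t+b+c+4) := by rw [← pow_succ']
            _ ≤ q^(t+4+b+c+d) := Nat.pow_le_pow_right (by omega) (by omega)
        have f3 : q^(t+4+b+c+d) * 4 ≤ q^(t+4+b+c+d) * ((q-1)*(q-1)) := by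
          apply Nat.mul_le_mul_left
          have h2 : 2 ≤ q-1 := by omega
          calc (4:ℕ) = 2*2 := by norm_num
            _ ≤ (q-1)*(q-1) := Nat.mul_le_mul h2 h2
        omega
    exact lt_of_mul_lt_mul_right main (Nat.zero_le _)
  have key2 : S4 * C0 + 1 + q * (T * (S3 * X)) < C1 := by
    have h1 : q * (T * (S3 * X)) ≤ q * (T * S3) * C0 := by
      calc q * (T * (S3 * X)) = q * (T * S3) * X := by ring
        _ ≤ q * (T * S3) * C0 := Nat.mul_le_mul_left _ h4
    have h2 : (S4 + q * (T * S3)) * C0 < q^(t+4+b+c+d) * C0 :=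
      mul_lt_mul_of_pos_right hexp hC0pos
    have h3 : (S4 + q * (T * S3)) * C0 = S4 * C0 + q * (T * S3) * C0 := by ring
    omega
  have hs1 : G q (b+3) 1 = A + q^(b+2) := by
    have := G_one_succ' q (b+2)
    rw [show b+2+1 = b+3 from by omega] at this
    rw [this, hAdef]
  have hs2 : G q (c+2) 1 = q * u + 1 := by
    have := G_one_succ q (c+1)
    rw [show c+1+1 = c+2 from by omega] at this
    rw [this, hudef]
  calc A * C1 + q^(b+2) * G q (c+2) 1 * S4 * C0 + q^(b+2) * G q (c+2) 1 +
        q^(b+3) * T * S3 * X + 2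
      = A * C1 + q^(b+3) * (u * (S4 * C0)) + q^(b+3) * u +
        q^(b+2) * (S4 * C0 + 1 + q * (T * (S3 * X))) + 2 := by rw [hs2]; ring
    _ < A * C1 + q^(b+3) * (u * (S4 * C0)) + q^(b+3) * u + q^(b+2) * C1 + 2 := by
        have hm : q^(b+2) * (S4 * C0 + 1 + q * (T * (S3 * X))) < q^(b+2) * C1 :=
          mul_lt_mul_of_pos_left key2 (by positivity)
        omega
    _ ≤ G q (b+3) 1 * C1 + q^(b+3) * u * S4 * C0 + q^(b+3) * u +
        q^(b+4) * T * S3 * Gn + 2 := by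
        rw [hs1]
        have hre : (A + q^(b+2)) * C1 + q^(b+3) * u * S4 * C0 + q^(b+3) * u +
            q^(b+4) * T * S3 * Gn + 2
            = (A * C1 + q^(b+3) * (u * (S4 * C0)) + q^(b+3) * u + q^(b+2) * C1 + 2)
              + q^(b+4) * T * S3 * Gn := by ring
        rw [hre]
        exact Nat.le_add_right _ _

end Stmt11

theorem stmt_11 (q n k t x : ℕ) (hq : 2 ≤ q) (ht : 0 < t) (htk : t + 3 ≤ k)
    (hn : 2 * k + 1 + (if q = 2 then 1 else 0) ≤ n)
    (hx : t + 2 ≤ x) (hxk : x ≤ k - 1) :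
    gAux q n k t x < gAux q n k t (x + 1) := by
  have hd2 : q = 2 → 2*k+2 ≤ n := by intro h; rw [h] at hn; simp at hn; omega
  have hn1 : 2*k+1 ≤ n := by split_ifs at hn <;> omega
  obtain ⟨b, rfl⟩ : ∃ b, x = t+2+b := ⟨x - t - 2, by omega⟩
  obtain ⟨c, rfl⟩ : ∃ c, k = t+3+b+c := ⟨k - (t+2+b) - 1, by omega⟩
  obtain ⟨d, hd, rfl⟩ : ∃ d, (q = 2 → 1 ≤ d) ∧ n = 2*(t+3+b+c)+1+d := by
    refine ⟨n - (2*(t+3+b+c)+1), ?_, by omega⟩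
    intro h2; have := hd2 h2; omega
  simp only [gAux, Stmt11.gauss_eq hq]
  simp only [show t+2+b - t = b+2 from by omega,
    show t+2+b+1 - t = b+3 from by omega,
    show 2*(t+3+b+c)+1+d - t - 1 = t+6+2*b+2*c+d from by omega,
    show 2*(t+3+b+c)+1+d - t - 2 = t+5+2*b+2*c+d from by omega,
    show t+3+b+c - t - 1 = b+c+2 from by omega,
    show t+3+b+c - t - 2 = b+c+1 from by omega,
    show t+3+b+c - t = b+c+3 from by omega,
    show b+c+3+1 = b+c+4 from by omega,
    show b+c+3-1 = b+c+2 from by omega,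
    show b+c+3-2 = b+c+1 from by omega,
    show t+3+b+c - (t+2+b) + 1 = c+2 from by omega,
    show t+3+b+c - (t+2+b) = c+1 from by omega,
    show c+1+1 = c+2 from by omega,
    show t+3+b+c - (t+2+b+1) + 1 = c+1 from by omega,
    show t+3+b+c - (t+2+b+1) = c from by omega,
    show 2*(t+3+b+c)+1+d - (t+2+b) = t+5+b+2*c+d from by omega,
    show 2*(t+3+b+c)+1+d - (t+2+b+1) = t+4+b+2*c+d from by omega,
    show b+2+1 = b+3 from by omega,
    show b+3+1 = b+4 from by omega]
  exact Stmt11.master q t b c d hq ht hd
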